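/- Let k be an algebraically closed field of characteristic zero and A, B ∈ k[[z]] of the same order n ≥ 2. Then G_A = G_B if and only if B = μ ∘ A for some μ ∈ k[[z]] of order 1. -/

import Mathlib

open PowerSeries

/-- Composition (substitution) `comp A B = A ∘ B` of formal power series,
the standard coefficient formula, well-behaved when `B` has zero constant term. -/
noncomputable def comp {k : Type*} [Field k] (A B : PowerSeries k) : PowerSeries k :=
  PowerSeries.mk fun n =>
    ∑ i ∈ Finset.range (n + 1), (PowerSeries.coeff (R := k) i A) * (PowerSeries.coeff (R := k) n (B ^ i))

/-- `iterComp φ j` is the `j`-fold compositional iterate `φ^{∘j}` (with `φ^{∘0} = z`). -/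
noncomputable def iterComp {k : Type*} [Field k] (φ : PowerSeries k) : ℕ → PowerSeries k
  | 0 => PowerSeries.X
  | n + 1 => comp φ (iterComp φ n)

/-- Composition of a list of power series: `compList [A₁, …, A_r] = A₁ ∘ ⋯ ∘ A_r`. -/
noncomputable def compList {k : Type*} [Field k] : List (PowerSeries k) → PowerSeries k
  | [] => PowerSeries.X
  | a :: t => comp a (compList t)

section Aux

variable {k : Type*} [Field k]

lemma coeff_comp (A B : PowerSeries k) (m : ℕ) :
    coeff m (comp A B) = ∑ i ∈ Finset.range (m + 1), coeff i A * coeff m (B ^ i) := by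
  simp [comp]

lemma coeff_pow_eq_zero {B : PowerSeries k} (hB : constantCoeff B = 0)
    {i m : ℕ} (h : m < i) : coeff m (B ^ i) = 0 := by
  obtain ⟨D, rfl⟩ := X_dvd_iff.2 hB
  rw [mul_pow]
  rw [PowerSeries.coeff_X_pow_mul' ]
  simp [Nat.not_le.2 h]

lemma coeff_eval₂ {B : PowerSeries k} (hB : constantCoeff B = 0) (P : Polynomial k) (m : ℕ) :
    coeff m (P.eval₂ C B) = ∑ i ∈ Finset.range (m + 1), P.coeff i * coeff m (B ^ i) := by
  rw [Polynomial.eval₂_eq_sum_range' C (n := P.natDegree + m + 1) (by omega) B, map_sum]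
  have hsub : Finset.range (m + 1) ⊆ Finset.range (P.natDegree + m + 1) :=
    Finset.range_subset_range.2 (by omega)
  rw [← Finset.sum_subset hsub ?_]
  · exact Finset.sum_congr rfl fun i _ => by rw [PowerSeries.coeff_C_mul]
  · intro i _ hi
    simp only [Finset.mem_range, Nat.lt_succ_iff, not_le] at hi
    rw [PowerSeries.coeff_C_mul, coeff_pow_eq_zero hB hi, mul_zero]

lemma coeff_trunc_mul (A A' : PowerSeries k) {i N : ℕ} (h : i < N) :
    (A.trunc N * A'.trunc N).coeff i = coeff i (A * A') := by
  rw [Polynomial.coeff_mul, PowerSeries.coeff_mul]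
  refine Finset.sum_congr rfl fun p hp => ?_
  rw [Finset.HasAntidiagonal.mem_antidiagonal] at hp
  rw [PowerSeries.coeff_trunc, PowerSeries.coeff_trunc, if_pos (by omega), if_pos (by omega)]

lemma coeff_comp_of_trunc {B : PowerSeries k} (hB : constantCoeff B = 0)
    (A : PowerSeries k) {m N : ℕ} (h : m < N) :
    coeff m (comp A B) = coeff m ((A.trunc N).eval₂ C B) := by
  rw [coeff_eval₂ hB, coeff_comp]
  exact Finset.sum_congr rfl fun i hi => by
    rw [Finset.mem_range] at hi
    rw [PowerSeries.coeff_trunc, if_pos (by omega)]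

lemma comp_mul {B : PowerSeries k} (hB : constantCoeff B = 0) (A A' : PowerSeries k) :
    comp (A * A') B = comp A B * comp A' B := by
  ext m
  rw [PowerSeries.coeff_mul, coeff_comp]
  have key : ∀ i, i < m + 1 →
      coeff i (A * A') * coeff m (B ^ i)
        = (A.trunc (m+1) * A'.trunc (m+1)).coeff i * coeff m (B ^ i) := fun i hi => by
    rw [coeff_trunc_mul A A' hi]
  rw [Finset.sum_congr rfl (fun i hi => key i (Finset.mem_range.1 hi)),
    ← coeff_eval₂ hB, Polynomial.eval₂_mul, PowerSeries.coeff_mul]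
  refine Finset.sum_congr rfl fun p hp => ?_
  rw [Finset.HasAntidiagonal.mem_antidiagonal] at hp
  rw [← coeff_comp_of_trunc hB A (by omega : p.1 < m + 1),
    ← coeff_comp_of_trunc hB A' (by omega : p.2 < m + 1)]

lemma comp_one {B : PowerSeries k} : comp (1 : PowerSeries k) B = 1 := by
  ext m
  rw [coeff_comp]
  simp [PowerSeries.coeff_one]

lemma comp_add (A A' B : PowerSeries k) : comp (A + A') B = comp A B + comp A' B := by
  ext m
  rw [map_add, coeff_comp, coeff_comp, coeff_comp, ← Finset.sum_add_distrib]
  exact Finset.sum_congr rfl fun i _ => by rw [map_add, add_mul]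

lemma comp_pow {B : PowerSeries k} (hB : constantCoeff B = 0) (A : PowerSeries k) (j : ℕ) :
    comp (A ^ j) B = (comp A B) ^ j := by
  induction j with
  | zero => simpa using comp_one
  | succ j ih => rw [pow_succ, pow_succ, comp_mul hB, ih]

lemma comp_C (c : k) (B : PowerSeries k) : comp (C c) B = C c := by
  ext m
  rw [coeff_comp]
  simp [PowerSeries.coeff_C]

lemma comp_X_right (A : PowerSeries k) : comp A X = A := by
  ext m
  rw [coeff_comp]
  simp [PowerSeries.coeff_X_pow]

lemma comp_X_left {B : PowerSeries k} (hB : constantCoeff B = 0) : comp X B = B := by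
  ext m
  rw [coeff_comp]
  rcases Nat.eq_zero_or_pos m with rfl | hm
  · simp [PowerSeries.coeff_zero_eq_constantCoeff, hB]
  · rw [Finset.sum_eq_single 1]
    · simp
    · intro i _ hi
      rcases i with _ | _ | i
      · simp
      · simp at hi
      · rw [PowerSeries.coeff_X]; simp
    · intro h; simp at h; omega

lemma constantCoeff_comp (A B : PowerSeries k) :
    constantCoeff (comp A B) = constantCoeff A := by
  rw [← PowerSeries.coeff_zero_eq_constantCoeff, coeff_comp]
  simp

lemma coeff_one_comp (B : PowerSeries k) (A : PowerSeries k) :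
    coeff 1 (comp A B) = coeff 1 A * coeff 1 B := by
  rw [coeff_comp]
  rw [Finset.sum_range_succ, Finset.sum_range_succ]
  simp [PowerSeries.coeff_one]

lemma comp_assoc {B C' : PowerSeries k} (hB : constantCoeff B = 0)
    (hC : constantCoeff C' = 0) (A : PowerSeries k) :
    comp (comp A B) C' = comp A (comp B C') := by
  ext m
  rw [coeff_comp, coeff_comp]
  have step1 : ∀ i ∈ Finset.range (m+1),
      coeff i (comp A B) * coeff m (C' ^ i)
        = ∑ j ∈ Finset.range (m+1), coeff j A * coeff i (B ^ j) * coeff m (C' ^ i) := by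
    intro i hi
    rw [Finset.mem_range] at hi
    rw [coeff_comp, Finset.sum_mul]
    have hsub : Finset.range (i + 1) ⊆ Finset.range (m + 1) := Finset.range_subset_range.2 (by omega)
    refine Finset.sum_subset hsub fun j _ hj => ?_
    simp only [Finset.mem_range, not_lt] at hj
    rw [coeff_pow_eq_zero hB (by omega), mul_zero, zero_mul]
  rw [Finset.sum_congr rfl step1, Finset.sum_comm]
  refine Finset.sum_congr rfl fun j _ => ?_
  rw [← comp_pow hC B j, coeff_comp, Finset.mul_sum]
  exact Finset.sum_congr rfl fun i _ => by ring

/-- Powers agree below `m` if the series agree below `m`. -/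
lemma coeff_pow_congr_below {f g : PowerSeries k}
    (hfg : ∀ j, j < m → coeff j f = coeff j g) :
    ∀ i q, q < m → coeff q (f ^ i) = coeff q (g ^ i) := by
  intro i
  induction i with
  | zero => intro q _; rfl
  | succ i ih =>
    intro q hq
    rw [pow_succ, pow_succ, PowerSeries.coeff_mul, PowerSeries.coeff_mul]
    refine Finset.sum_congr rfl fun p hp => ?_
    rw [Finset.HasAntidiagonal.mem_antidiagonal] at hp
    rw [ih p.1 (by omega), hfg p.2 (by omega)]

/-- `coeff m (f ^ i)` depends only on the coefficients of `f` in degrees `≤ m - i + 1`,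
for series with zero constant term. -/
lemma coeff_pow_congr {f g : PowerSeries k}
    (hf : constantCoeff f = 0) (hg : constantCoeff g = 0) :
    ∀ i m, (∀ j, j + i ≤ m + 1 → coeff j f = coeff j g) →
      coeff m (f ^ i) = coeff m (g ^ i) := by
  intro i
  induction i with
  | zero => intro m _; rfl
  | succ i ih =>
    intro m h
    rw [pow_succ', pow_succ', PowerSeries.coeff_mul, PowerSeries.coeff_mul]
    refine Finset.sum_congr rfl fun p hp => ?_
    rw [Finset.HasAntidiagonal.mem_antidiagonal] at hp
    rcases Nat.eq_zero_or_pos p.1 with h1 | h1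
    · rw [h1, PowerSeries.coeff_zero_eq_constantCoeff, hf, hg, zero_mul, zero_mul]
    rcases Nat.lt_or_ge p.2 i with h2 | h2
    · rw [coeff_pow_eq_zero hf h2, coeff_pow_eq_zero hg h2, mul_zero, mul_zero]
    · rw [h p.1 (by omega), ih p.2 (fun j hj => h j (by omega))]

lemma constantCoeff_pow_one {f : PowerSeries k} (hf : constantCoeff f = 1) (i : ℕ) :
    coeff 0 (f ^ i) = 1 := by
  rw [PowerSeries.coeff_zero_eq_constantCoeff, map_pow, hf, one_pow]

/-- Derivative-style congruence for powers of series with constant term 1. -/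
lemma coeff_pow_congr_one {f g : PowerSeries k} {m : ℕ} (hm : 1 ≤ m)
    (hf : constantCoeff f = 1) (hg : constantCoeff g = 1)
    (hfg : ∀ j, j < m → coeff j f = coeff j g) :
    ∀ i : ℕ, coeff m (f ^ i) = coeff m (g ^ i)
      + (i : k) * (coeff m f - coeff m g) := by
  intro i
  induction i with
  | zero => simp
  | succ i ih =>
    rw [pow_succ', pow_succ', PowerSeries.coeff_mul, PowerSeries.coeff_mul]
    have hmem0 : ((0 : ℕ), m) ∈ Finset.HasAntidiagonal.antidiagonal m := by simp
    have hmemm : ((m : ℕ), 0) ∈ Finset.HasAntidiagonal.antidiagonal m := by simp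
    rw [← Finset.add_sum_erase _ _ hmem0, ← Finset.add_sum_erase _ _ hmem0,
      ← Finset.add_sum_erase _ _ (Finset.mem_erase.2 ⟨by simp [Prod.ext_iff]; omega, hmemm⟩),
      ← Finset.add_sum_erase _ _ (Finset.mem_erase.2 ⟨by simp [Prod.ext_iff]; omega, hmemm⟩)]
    have hrest : ∑ p ∈ ((Finset.HasAntidiagonal.antidiagonal m).erase (0, m)).erase (m, 0),
        coeff p.1 f * coeff p.2 (f ^ i)
        = ∑ p ∈ ((Finset.HasAntidiagonal.antidiagonal m).erase (0, m)).erase (m, 0),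
        coeff p.1 g * coeff p.2 (g ^ i) := by
      refine Finset.sum_congr rfl fun p hp => ?_
      have h1 := Finset.mem_erase.1 hp
      have h2 := Finset.mem_erase.1 h1.2
      rw [Finset.HasAntidiagonal.mem_antidiagonal] at h2
      have hne1 : p ≠ (m, 0) := h1.1
      have hne2 : p ≠ (0, m) := h2.1
      have hp1 : p.1 < m := by
        rcases Nat.lt_or_ge p.1 m with h | h
        · exact h
        · exfalso; apply hne1; have : p.1 = m := by omega
          exact Prod.ext this (by omega)
      have hp2 : p.2 < m := by
        rcases Nat.lt_or_ge p.2 m with h | h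
        · exact h
        · exfalso; apply hne2; have : p.2 = m := by omega
          exact Prod.ext (by omega) this
      rw [hfg p.1 hp1, coeff_pow_congr_below hfg i p.2 hp2]
    rw [hrest]
    simp only [PowerSeries.coeff_zero_eq_constantCoeff, hf, hg, one_mul,
      constantCoeff_pow_one hf, constantCoeff_pow_one hg, mul_one, ih]
    push_cast
    ring

noncomputable def invAux (φ : PowerSeries k) : ℕ → k
  | 0 => 0
  | 1 => (coeff 1 φ)⁻¹
  | (m+2) => -(coeff 1 φ)⁻¹ * ∑ i ∈ Finset.Icc 2 (m+2), coeff i φ *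
      coeff (m+2) ((PowerSeries.mk fun j => if h : j < m+2 then invAux φ j else 0) ^ i)
  termination_by m => m

lemma comp_invAux (φ : PowerSeries k) (h0 : constantCoeff φ = 0)
    (h1 : coeff 1 φ ≠ 0) : comp φ (PowerSeries.mk (invAux φ)) = X := by
  set ψ := PowerSeries.mk (invAux φ) with hψ
  have hψ0 : constantCoeff ψ = 0 := by
    rw [hψ, ← PowerSeries.coeff_zero_eq_constantCoeff, PowerSeries.coeff_mk, invAux]
  ext m
  rw [coeff_comp]
  match m with
  | 0 =>
    simp only [Finset.range_one, Finset.sum_singleton, pow_zero,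
      PowerSeries.coeff_zero_eq_constantCoeff, map_one, mul_one]
    simp [h0]
  | 1 =>
    rw [Finset.sum_range_succ, Finset.sum_range_succ, Finset.range_zero, Finset.sum_empty,
      pow_zero, pow_one, zero_add, hψ, PowerSeries.coeff_mk, invAux,
      mul_inv_cancel₀ h1, PowerSeries.coeff_one, PowerSeries.coeff_X]
    simp
  | (m+2) =>
    have hsplit : Finset.range (m+2+1) = insert 0 (insert 1 (Finset.Icc 2 (m+2))) := by
      ext i
      simp [Finset.mem_range, Finset.mem_Icc]
      omega
    rw [hsplit, Finset.sum_insert (by simp), Finset.sum_insert (by simp)]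
    have e0 : coeff 0 φ * coeff (m+2) (ψ ^ 0) = 0 := by
      rw [PowerSeries.coeff_zero_eq_constantCoeff, h0, zero_mul]
    have eT : ∀ i ∈ Finset.Icc 2 (m+2), coeff i φ * coeff (m+2) (ψ ^ i)
        = coeff i φ * coeff (m+2)
          ((PowerSeries.mk fun j => if h : j < m+2 then invAux φ j else 0) ^ i) := by
      intro i hi
      rw [Finset.mem_Icc] at hi
      congr 1
      refine coeff_pow_congr hψ0 ?_ i (m+2) fun j hj => ?_
      · rw [← PowerSeries.coeff_zero_eq_constantCoeff, PowerSeries.coeff_mk,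
          dif_pos (by omega : (0:ℕ) < m+2)]
        rw [invAux]
      · rw [hψ, PowerSeries.coeff_mk, PowerSeries.coeff_mk, dif_pos (by omega : j < m+2)]
    rw [Finset.sum_congr rfl eT, e0, zero_add]
    have hψm : coeff (m+2) ψ = invAux φ (m+2) := by rw [hψ, PowerSeries.coeff_mk]
    rw [pow_one, hψm, invAux, PowerSeries.coeff_X, if_neg (by omega)]
    field_simp
    ring

lemma exists_comp_inv (φ : PowerSeries k) (h0 : constantCoeff φ = 0)
    (h1 : coeff 1 φ ≠ 0) :
    ∃ ψ : PowerSeries k, constantCoeff ψ = 0 ∧ coeff 1 ψ ≠ 0 ∧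
      comp φ ψ = X ∧ comp ψ φ = X := by
  have key : ∀ χ : PowerSeries k, constantCoeff χ = 0 → coeff 1 χ ≠ 0 →
      ∃ ρ : PowerSeries k, constantCoeff ρ = 0 ∧ coeff 1 ρ ≠ 0 ∧ comp χ ρ = X := by
    intro χ hc0 hc1
    refine ⟨PowerSeries.mk (invAux χ), ?_, ?_, comp_invAux χ hc0 hc1⟩
    · rw [← PowerSeries.coeff_zero_eq_constantCoeff, PowerSeries.coeff_mk]; rw [invAux]
    · rw [PowerSeries.coeff_mk, invAux]; exact inv_ne_zero hc1
  obtain ⟨ψ, hψ0, hψ1, hcomp⟩ := key φ h0 h1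
  obtain ⟨χ, hχ0, _, hcomp2⟩ := key ψ hψ0 hψ1
  have hφχ : φ = χ := by
    have := comp_assoc hψ0 hχ0 φ
    rw [hcomp, hcomp2, comp_X_left hχ0, comp_X_right] at this
    exact this.symm
  exact ⟨ψ, hψ0, hψ1, hcomp, hφχ ▸ hcomp2⟩

/-- Right-composition with an order-one series is injective. -/
lemma comp_right_cancel {w : PowerSeries k} (h0 : constantCoeff w = 0)
    (h1 : coeff 1 w ≠ 0) {f g : PowerSeries k}
    (h : comp f w = comp g w) : f = g := by
  obtain ⟨ψ, hψ0, _, hri, _⟩ := exists_comp_inv w h0 h1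
  have hf := comp_assoc h0 hψ0 f
  have hg := comp_assoc h0 hψ0 g
  rw [hri, comp_X_right] at hf hg
  rw [← hf, ← hg, h]

noncomputable def rootAux (V : PowerSeries k) (n : ℕ) : ℕ → k
  | 0 => 1
  | (m+1) => (n : k)⁻¹ * (coeff (m+1) V -
      coeff (m+1) ((PowerSeries.mk fun j => if h : j < m+1 then rootAux V n j else 0) ^ n))
  termination_by m => m

lemma pow_rootAux [CharZero k] {V : PowerSeries k} (hV : constantCoeff V = 1)
    {n : ℕ} (hn : 1 ≤ n) : (PowerSeries.mk (rootAux V n)) ^ n = V := by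
  set W := PowerSeries.mk (rootAux V n) with hW
  have hW0 : constantCoeff W = 1 := by
    rw [hW, ← PowerSeries.coeff_zero_eq_constantCoeff, PowerSeries.coeff_mk]; rw [rootAux]
  have hnk : (n : k) ≠ 0 := Nat.cast_ne_zero.2 (by omega)
  ext m
  match m with
  | 0 =>
    rw [PowerSeries.coeff_zero_eq_constantCoeff, map_pow, hW0, one_pow, hV]
  | (m+1) =>
    set T := PowerSeries.mk fun j => if h : j < m+1 then rootAux V n j else 0 with hT
    have hT0 : constantCoeff T = 1 := by
      rw [hT, ← PowerSeries.coeff_zero_eq_constantCoeff, PowerSeries.coeff_mk,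
        dif_pos (by omega : (0:ℕ) < m+1)]; rw [rootAux]
    have hagree : ∀ j, j < m+1 → coeff j W = coeff j T := by
      intro j hj
      rw [hW, hT, PowerSeries.coeff_mk, PowerSeries.coeff_mk, dif_pos hj]
    have hTm : coeff (m+1) T = 0 := by
      rw [hT, PowerSeries.coeff_mk, dif_neg (by omega)]
    have := coeff_pow_congr_one (by omega : 1 ≤ m+1) hW0 hT0 hagree n
    rw [this, hTm, sub_zero]
    have hWm : coeff (m+1) W = (n : k)⁻¹ * (coeff (m+1) V - coeff (m+1) (T ^ n)) := by
      rw [hW, PowerSeries.coeff_mk]; rw [rootAux, hT]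
    rw [hWm]
    field_simp
    ring

lemma exists_order_root [CharZero k] [IsAlgClosed k] {A : PowerSeries k} {n : ℕ}
    (hn : 1 ≤ n) (hA : A.order = (n : ℕ∞)) :
    ∃ w : PowerSeries k, constantCoeff w = 0 ∧ coeff 1 w ≠ 0 ∧ w ^ n = A := by
  rw [PowerSeries.order_eq_nat] at hA
  obtain ⟨U, hU⟩ := PowerSeries.X_pow_dvd_iff.2 (fun m hm => hA.2 m hm)
  have hc : constantCoeff U ≠ 0 := by
    intro h
    apply hA.1
    rw [hU, PowerSeries.coeff_X_pow_mul' , if_pos le_rfl, Nat.sub_self,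
      PowerSeries.coeff_zero_eq_constantCoeff, h]
  set c := constantCoeff U with hc'
  obtain ⟨d, hd⟩ := IsAlgClosed.exists_pow_nat_eq c (by omega : 0 < n)
  have hd0 : d ≠ 0 := by
    intro h; apply hc; rw [← hd, h, zero_pow (by omega)]
  set V := C c⁻¹ * U with hV
  have hV1 : constantCoeff V = 1 := by
    rw [hV, map_mul, PowerSeries.constantCoeff_C, ← hc', inv_mul_cancel₀ hc]
  obtain W := PowerSeries.mk (rootAux V n)
  have hWn : (PowerSeries.mk (rootAux V n)) ^ n = V := pow_rootAux hV1 hn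
  refine ⟨C d * X * PowerSeries.mk (rootAux V n), ?_, ?_, ?_⟩
  · simp
  · have h01 : (1 : ℕ) = 0 + 1 := rfl
    rw [mul_assoc, PowerSeries.coeff_C_mul, h01, PowerSeries.coeff_succ_X_mul,
      PowerSeries.coeff_mk]
    rw [rootAux]
    simpa using hd0
  · rw [mul_pow, mul_pow, ← map_pow, hd, hWn, hV, hU]
    have hcc : C c * C c⁻¹ = 1 := by rw [← map_mul, mul_inv_cancel₀ hc, map_one]
    calc (C c) * X ^ n * ((C c⁻¹) * U)
        = ((C c) * (C c⁻¹)) * (X ^ n * U) := by ring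
      _ = X ^ n * U := by rw [hcc, one_mul]

lemma exists_unity_smul [IsAlgClosed k] {n : ℕ} (hn : 1 ≤ n) {u v : PowerSeries k}
    (hv : v ≠ 0) (h : u ^ n = v ^ n) : ∃ τ : k, τ ^ n = 1 ∧ u = C τ * v := by
  let K := FractionRing (PowerSeries k)
  let f : PowerSeries k →+* K := algebraMap (PowerSeries k) K
  have hinj : Function.Injective f := IsFractionRing.injective _ _
  have hfv : f v ≠ 0 := fun hc => hv (hinj (by rw [hc, map_zero]))
  set r := f u / f v with hr'
  have hr : r ^ n = 1 := by
    rw [hr', div_pow, ← map_pow, ← map_pow, h, div_self (by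
      rw [map_pow]; exact pow_ne_zero _ hfv)]
  set p : Polynomial k := Polynomial.X ^ n - Polynomial.C 1 with hp
  have hmonic : p.Monic := Polynomial.monic_X_pow_sub_C 1 (by omega)
  have hsplits : p.Splits := IsAlgClosed.splits p
  set g : k →+* K := f.comp C with hg
  have hroot : r ∈ (p.map g).roots := by
    rw [Polynomial.mem_roots (hmonic.map g).ne_zero]
    simp [hp, Polynomial.IsRoot, hr]
  rw [hsplits.roots_map g] at hroot
  obtain ⟨τ, hτmem, hτ⟩ := Multiset.mem_map.1 hroot
  have hτroot := Polynomial.isRoot_of_mem_roots hτmem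
  have hτn : τ ^ n = 1 := by
    have := hτroot
    simp [hp, Polynomial.IsRoot] at this
    exact sub_eq_zero.1 (by simpa using this)
  refine ⟨τ, hτn, hinj ?_⟩
  have : f u = g τ * f v := by
    rw [hτ, hr', div_mul_cancel₀ _ hfv]
  rw [this, map_mul]
  rfl

lemma coeff_pow_self {s : PowerSeries k} (h0 : constantCoeff s = 0) (i : ℕ) :
    coeff i (s ^ i) = (coeff 1 s) ^ i := by
  induction i with
  | zero => simp
  | succ i ih =>
    rw [pow_succ', PowerSeries.coeff_mul, Finset.sum_eq_single (1, i)]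
    · rw [ih, pow_succ']
    · rintro ⟨p, q⟩ hmem hne
      rw [Finset.HasAntidiagonal.mem_antidiagonal] at hmem
      rcases Nat.lt_or_ge q i with hq | hq
      · rw [coeff_pow_eq_zero h0 hq, mul_zero]
      · have : q = i ∨ q = i + 1 := by omega
        rcases this with rfl | rfl
        · exact absurd (by simp [Prod.ext_iff]; omega) hne
        · rw [(by omega : p = 0), PowerSeries.coeff_zero_eq_constantCoeff, h0, zero_mul]
    · intro hmem
      exact absurd (Finset.HasAntidiagonal.mem_antidiagonal.2 (by omega)) hmem

lemma coeff_pow_support {s : PowerSeries k} {n : ℕ}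
    (hs : ∀ m, coeff m s ≠ 0 → m % n = 1 % n) :
    ∀ i m, coeff m (s ^ i) ≠ 0 → m % n = i % n := by
  intro i
  induction i with
  | zero =>
    intro m h
    rw [pow_zero] at h
    have : m = 0 := by
      by_contra hm
      exact h (by simp [PowerSeries.coeff_one, hm])
    simp [this]
  | succ i ih =>
    intro m h
    rw [pow_succ', PowerSeries.coeff_mul] at h
    obtain ⟨⟨p, q⟩, hmem, hne⟩ := Finset.exists_ne_zero_of_sum_ne_zero h
    rw [Finset.HasAntidiagonal.mem_antidiagonal] at hmem
    have hp := hs p (fun hc => hne (by rw [hc, zero_mul]))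
    have hq := ih q (fun hc => hne (by rw [hc, mul_zero]))
    rw [← hmem, Nat.add_mod, hp, hq, ← Nat.add_mod, Nat.add_comm]

lemma order_eq_one_iff {f : PowerSeries k} :
    f.order = (1 : ℕ∞) ↔ constantCoeff f = 0 ∧ coeff 1 f ≠ 0 := by
  rw [show ((1:ℕ∞)) = ((1:ℕ) : ℕ∞) from rfl, PowerSeries.order_eq_nat]
  constructor
  · rintro ⟨h1, h2⟩
    exact ⟨by rw [← PowerSeries.coeff_zero_eq_constantCoeff]; exact h2 0 (by omega), h1⟩
  · rintro ⟨h1, h2⟩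
    refine ⟨h2, fun i hi => ?_⟩
    have : i = 0 := by omega
    rw [this, PowerSeries.coeff_zero_eq_constantCoeff]; exact h1

lemma coeff_comp_CX (s : PowerSeries k) (ζ : k) (m : ℕ) :
    coeff m (comp s (C ζ * X)) = coeff m s * ζ ^ m := by
  rw [coeff_comp, Finset.sum_eq_single m]
  · rw [mul_pow, ← map_pow, PowerSeries.coeff_C_mul, PowerSeries.coeff_X_pow, if_pos rfl,
      mul_one]
  · intro i hi hne
    rw [mul_pow, ← map_pow, PowerSeries.coeff_C_mul, PowerSeries.coeff_X_pow,
      if_neg (fun hc => hne hc.symm), mul_zero, mul_zero]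
  · intro hmem
    exact absurd (Finset.mem_range.2 (by omega)) hmem

lemma comp_mu_X_pow {s : PowerSeries k} {n : ℕ} (hn : 1 ≤ n)
    (hsupp : ∀ m, coeff m (s ^ n) ≠ 0 → n ∣ m) :
    comp (PowerSeries.mk fun j => coeff (n * j) (s ^ n)) (X ^ n) = s ^ n := by
  ext m
  rw [coeff_comp]
  by_cases hdvd : n ∣ m
  · obtain ⟨j, rfl⟩ := hdvd
    rw [Finset.sum_eq_single j]
    · rw [← pow_mul, PowerSeries.coeff_X_pow, if_pos rfl, mul_one, PowerSeries.coeff_mk]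
    · intro i _ hne
      rw [← pow_mul, PowerSeries.coeff_X_pow,
        if_neg (fun hc => hne (Nat.eq_of_mul_eq_mul_left (by omega) hc.symm)), mul_zero]
    · intro hmem
      exfalso
      apply hmem
      have := Nat.le_mul_of_pos_left j (by omega : 0 < n)
      exact Finset.mem_range.2 (by omega)
  · rw [Finset.sum_eq_zero, eq_comm]
    · by_contra hc
      exact hdvd (hsupp m hc)
    · intro i _
      rw [← pow_mul, PowerSeries.coeff_X_pow, if_neg (fun hc => hdvd ⟨i, hc⟩), mul_zero]

lemma comp_left_cancel {μ f g : PowerSeries k} (hμ0 : constantCoeff μ = 0)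
    (hμ1 : coeff 1 μ ≠ 0) (hf : constantCoeff f = 0) (hg : constantCoeff g = 0)
    (h : comp μ f = comp μ g) : f = g := by
  obtain ⟨ψ, hψ0, _, _, hli⟩ := exists_comp_inv μ hμ0 hμ1
  have hf' := comp_assoc hμ0 hf ψ
  have hg' := comp_assoc hμ0 hg ψ
  rw [hli, comp_X_left hf] at hf'
  rw [hli, comp_X_left hg] at hg'
  rw [hf', hg', h]

end Aux

theorem stmt11 {k : Type*} [Field k] [IsAlgClosed k] [CharZero k]
    {n : ℕ} (hn : 2 ≤ n) (A B : PowerSeries k)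
    (hA : A.order = (n : ℕ∞)) (hB : B.order = (n : ℕ∞)) :
    {φ : PowerSeries k | φ.order = 1 ∧ comp A φ = A} =
      {φ : PowerSeries k | φ.order = 1 ∧ comp B φ = B} ↔
      ∃ μ : PowerSeries k, μ.order = 1 ∧ B = comp μ A := by
  have hA0 : constantCoeff A = 0 := by
    rw [← PowerSeries.coeff_zero_eq_constantCoeff]
    exact (PowerSeries.order_eq_nat.1 hA).2 0 (by omega)
  constructor
  · -- forward
    intro hsets
    obtain ⟨w, hw0, hw1, hwA⟩ := exists_order_root (by omega : 1 ≤ n) hA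
    obtain ⟨v, hv0, hv1, hvB⟩ := exists_order_root (by omega : 1 ≤ n) hB
    obtain ⟨wi, hwi0, hwi1, hwwi, hwiw⟩ := exists_comp_inv w hw0 hw1
    set s := comp v wi with hs
    have hs0 : constantCoeff s = 0 := by rw [hs, constantCoeff_comp, hv0]
    have hs1 : coeff 1 s ≠ 0 := by
      rw [hs, coeff_one_comp]
      exact mul_ne_zero hv1 hwi1
    have hsw : comp s w = v := by
      rw [hs, comp_assoc hwi0 hw0 v, hwiw, comp_X_right]
    have hvne : v ≠ 0 := fun h => hv1 (by rw [h, map_zero])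
    haveI : NeZero (n : k) := ⟨Nat.cast_ne_zero.2 (by omega)⟩
    obtain ⟨ζ₀, hζ₀⟩ := HasEnoughRootsOfUnity.exists_primitiveRoot k n
    -- key claim
    have key : ∀ ζ : k, ζ ^ n = 1 → ∀ m : ℕ, coeff m s * ζ ^ m = ζ * coeff m s := by
      intro ζ hζ
      set φ := comp wi (C ζ * w) with hφ
      have hcw : constantCoeff (C ζ * w) = 0 := by simp [hw0]
      have hφ0 : constantCoeff φ = 0 := by rw [hφ, constantCoeff_comp, hwi0]
      have hζne : ζ ≠ 0 := fun h => one_ne_zero (by rw [← hζ, h, zero_pow (by omega : n ≠ 0)])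
      have hφ1 : coeff 1 φ ≠ 0 := by
        rw [hφ, coeff_one_comp, PowerSeries.coeff_C_mul]
        exact mul_ne_zero hwi1 (mul_ne_zero hζne hw1)
      have hwφ : comp w φ = C ζ * w := by
        rw [hφ, ← comp_assoc hwi0 hcw w, hwwi, comp_X_left hcw]
      have hAφ : comp A φ = A := by
        rw [← hwA, comp_pow hφ0, hwφ, mul_pow, ← map_pow, hζ, map_one, one_mul]
      have hmem : φ ∈ {φ : PowerSeries k | φ.order = 1 ∧ comp A φ = A} :=
        ⟨order_eq_one_iff.2 ⟨hφ0, hφ1⟩, hAφ⟩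
      rw [hsets] at hmem
      obtain ⟨-, hBφ⟩ := hmem
      have hun : (comp v φ) ^ n = v ^ n := by
        rw [← comp_pow hφ0 v, hvB, hBφ, ← hvB]
      obtain ⟨τ, hτn, hτ⟩ := exists_unity_smul (by omega : 1 ≤ n) hvne hun
      have hCX0 : constantCoeff (C ζ * X) = 0 := by simp
      have hcomp : comp s (C ζ * X) = C τ * s := by
        refine comp_right_cancel hw0 hw1 ?_
        have lhs1 : comp (comp s (C ζ * X)) w = comp s (C ζ * w) := by
          rw [comp_assoc hCX0 hw0 s, comp_mul hw0, comp_C, comp_X_left hw0]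
        have lhs2 : comp s (C ζ * w) = comp v φ := by
          rw [← hsw, comp_assoc hw0 hφ0 s, hwφ]
        have rhs1 : comp (C τ * s) w = C τ * v := by
          rw [comp_mul hw0, comp_C, hsw]
        rw [lhs1, lhs2, rhs1, hτ]
      have hcm : ∀ m : ℕ, coeff m s * ζ ^ m = τ * coeff m s := by
        intro m
        have := congrArg (coeff m) hcomp
        rwa [coeff_comp_CX, PowerSeries.coeff_C_mul] at this
      have hτζ : τ = ζ := by
        have h1 := hcm 1
        rw [pow_one] at h1
        have h2 : ζ * coeff 1 s = τ * coeff 1 s := by rw [← h1]; ring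
        exact (mul_right_cancel₀ hs1 h2).symm
      rw [hτζ] at hcm
      exact hcm
    -- support of s
    have hsupp : ∀ m, coeff m s ≠ 0 → m % n = 1 % n := by
      intro m hm
      have h := key ζ₀ hζ₀.pow_eq_one m
      rw [mul_comm (coeff m s)] at h
      have hpow : ζ₀ ^ m = ζ₀ ^ 1 := by
        rw [pow_one]
        exact mul_right_cancel₀ hm h
      rw [pow_eq_pow_mod m hζ₀.pow_eq_one, pow_eq_pow_mod 1 hζ₀.pow_eq_one] at hpow
      exact hζ₀.pow_inj (Nat.mod_lt _ (by omega)) (Nat.mod_lt _ (by omega)) hpow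
    have hsuppn : ∀ m, coeff m (s ^ n) ≠ 0 → n ∣ m := by
      intro m hm
      have := coeff_pow_support hsupp n m hm
      rw [Nat.mod_self] at this
      exact Nat.dvd_of_mod_eq_zero this
    set μ := PowerSeries.mk fun j => coeff (n * j) (s ^ n) with hμ
    have hμX : comp μ (X ^ n) = s ^ n := comp_mu_X_pow (by omega) hsuppn
    have hXn0 : constantCoeff ((X : PowerSeries k) ^ n) = 0 := by
      rw [map_pow, PowerSeries.constantCoeff_X, zero_pow (by omega : n ≠ 0)]
    refine ⟨μ, order_eq_one_iff.2 ⟨?_, ?_⟩, ?_⟩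
    · rw [hμ, ← PowerSeries.coeff_zero_eq_constantCoeff, PowerSeries.coeff_mk, Nat.mul_zero,
        PowerSeries.coeff_zero_eq_constantCoeff, map_pow, hs0, zero_pow (by omega : n ≠ 0)]
    · rw [hμ, PowerSeries.coeff_mk, Nat.mul_one, coeff_pow_self hs0]
      exact pow_ne_zero _ hs1
    · rw [← hvB, ← hsw, ← comp_pow hw0 s, ← hμX, comp_assoc hXn0 hw0 μ,
        comp_pow hw0 X, comp_X_left hw0, hwA]
  · -- backward
    rintro ⟨μ, hμord, rfl⟩
    obtain ⟨hμ0, hμ1⟩ := order_eq_one_iff.1 hμord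
    ext φ
    simp only [Set.mem_setOf_eq]
    constructor
    · rintro ⟨hφord, hAφ⟩
      obtain ⟨hφ0, -⟩ := order_eq_one_iff.1 hφord
      exact ⟨hφord, by rw [comp_assoc hA0 hφ0 μ, hAφ]⟩
    · rintro ⟨hφord, hBφ⟩
      obtain ⟨hφ0, -⟩ := order_eq_one_iff.1 hφord
      refine ⟨hφord, ?_⟩
      rw [comp_assoc hA0 hφ0 μ] at hBφ
      exact comp_left_cancel hμ0 hμ1 (by rw [constantCoeff_comp, hA0]) hA0 hBφ
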